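/- arXiv:2207.13469 — 5 statements merged into one kernel-verified Lean document; each statement's English description precedes it below -/
import Mathlib

section
/- Suppose for each i = 1,...,L the distribution of outcomes of (A_i, B_i) on a separable bipartite state arises as a common convex combination ∑_j λ_j (a^{(j)}_i ⊗ b^{(j)}_i) of product distributions (same weights λ_j for all i). If the single-system distributions satisfy ∑_i H(a^{(j)}_i) ≥ f_A and ∑_i H(b^{(j)}_i) ≥ f_B for every j, and also ∑_i H(A_i) ≥ f_A for the mixed marginals, then ∑_{i=1}^L H(A_i, B_i) ≥ f_A + f_B. -/
open Finset

/-- Shannon entropy (in bits) of a finitely supported distribution. -/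
noncomputable def shannon {α : Type*} [Fintype α] (p : α → ℝ) : ℝ :=
  -∑ a, p a * Real.logb 2 (p a)

/-- Marginal distribution on the first factor. -/
noncomputable def margX {X Y : Type*} [Fintype X] [Fintype Y] (p : X × Y → ℝ) (x : X) : ℝ :=
  ∑ y, p (x, y)

/-- Log-sum (Jensen) inequality for `x ↦ x * log x`. -/
lemma key_logsum {J : Type*} [Fintype J] (d c : J → ℝ) (hd : ∀ j, 0 ≤ d j) (hc : ∀ j, 0 ≤ c j) :
    (∑ j, d j * c j) * Real.log (∑ j, d j * c j)
      - (∑ j, d j * c j) * Real.log (∑ j, d j) ≤ ∑ j, d j * c j * Real.log (c j) := by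
  set m := ∑ j, d j with hm
  set s := ∑ j, d j * c j with hs
  have hs0 : 0 ≤ s := Finset.sum_nonneg fun j _ => mul_nonneg (hd j) (hc j)
  have hm0 : 0 ≤ m := Finset.sum_nonneg fun j _ => hd j
  rcases eq_or_lt_of_le hs0 with h0 | hspos
  · have hterm : ∀ j, d j * c j = 0 := by
      intro j
      have := (Finset.sum_eq_zero_iff_of_nonneg (fun j _ => mul_nonneg (hd j) (hc j))).mp h0.symm
      exact this j (Finset.mem_univ j)
    have : ∑ j, d j * c j * Real.log (c j) = 0 :=
      Finset.sum_eq_zero fun j _ => by rw [hterm j, zero_mul]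
    rw [this, ← h0]; simp
  · have hmpos : 0 < m := by
      rcases eq_or_lt_of_le hm0 with h0 | h; swap; · exact h
      exfalso
      have hd0 : ∀ j, d j = 0 := fun j =>
        (Finset.sum_eq_zero_iff_of_nonneg (fun j _ => hd j)).mp h0.symm j (Finset.mem_univ j)
      have : s = 0 := Finset.sum_eq_zero fun j _ => by rw [hd0 j, zero_mul]
      exact absurd this (ne_of_gt hspos)
    have jensen := Real.convexOn_mul_log.map_sum_le (t := Finset.univ) (w := fun j => d j / m)
      (p := c) (fun j _ => div_nonneg (hd j) hm0)
      (by rw [← Finset.sum_div, ← hm, div_self (ne_of_gt hmpos)])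
      (fun j _ => hc j)
    simp only [smul_eq_mul] at jensen
    have hwc : ∑ j, d j / m * c j = s / m := by
      rw [hs, Finset.sum_div]; congr 1; ext j; ring
    rw [hwc] at jensen
    have := mul_le_mul_of_nonneg_left jensen hm0
    calc s * Real.log s - s * Real.log m = s * Real.log (s / m) := by
          rw [Real.log_div (ne_of_gt hspos) (ne_of_gt hmpos)]; ring
      _ = m * (s / m * Real.log (s / m)) := by field_simp
      _ ≤ m * ∑ j, d j / m * (c j * Real.log (c j)) := this
      _ = ∑ j, d j * c j * Real.log (c j) := by
          rw [Finset.mul_sum]; congr 1; ext j; field_simp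

/-- Same inequality with binary logarithm. -/
lemma key_logsum2 {J : Type*} [Fintype J] (d c : J → ℝ) (hd : ∀ j, 0 ≤ d j) (hc : ∀ j, 0 ≤ c j) :
    (∑ j, d j * c j) * Real.logb 2 (∑ j, d j * c j)
      - (∑ j, d j * c j) * Real.logb 2 (∑ j, d j) ≤ ∑ j, d j * c j * Real.logb 2 (c j) := by
  have h := key_logsum d c hd hc
  have h2 : (0:ℝ) < Real.log 2 := Real.log_pos (by norm_num)
  have := div_le_div_of_nonneg_right h h2.le
  simp only [Real.logb]
  calc (∑ j, d j * c j) * (Real.log (∑ j, d j * c j) / Real.log 2)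
        - (∑ j, d j * c j) * (Real.log (∑ j, d j) / Real.log 2)
      = ((∑ j, d j * c j) * Real.log (∑ j, d j * c j)
          - (∑ j, d j * c j) * Real.log (∑ j, d j)) / Real.log 2 := by ring
    _ ≤ (∑ j, d j * c j * Real.log (c j)) / Real.log 2 := this
    _ = ∑ j, d j * c j * (Real.log (c j) / Real.log 2) := by
        rw [Finset.sum_div]; congr 1; ext j; ring

theorem stmt_6 {X Y J : Type*} [Fintype X] [Fintype Y] [Fintype J] (L : ℕ)
    (lam : J → ℝ) (hlam0 : ∀ j, 0 ≤ lam j) (hlam1 : ∑ j, lam j = 1)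
    (a : J → Fin L → X → ℝ) (b : J → Fin L → Y → ℝ)
    (ha0 : ∀ j i x, 0 ≤ a j i x) (ha1 : ∀ j i, ∑ x, a j i x = 1)
    (hb0 : ∀ j i y, 0 ≤ b j i y) (hb1 : ∀ j i, ∑ y, b j i y = 1)
    (P : Fin L → X × Y → ℝ)
    (hP : ∀ i z, P i z = ∑ j, lam j * (a j i z.1 * b j i z.2))
    (fA fB : ℝ)
    (hfa : ∀ j, fA ≤ ∑ i, shannon (a j i))
    (hfb : ∀ j, fB ≤ ∑ i, shannon (b j i))
    (hA : fA ≤ ∑ i, shannon (fun x => margX (P i) x)) :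
    fA + fB ≤ ∑ i, shannon (P i) := by
  -- marginal identity
  have hmarg : ∀ i x, margX (P i) x = ∑ j, lam j * a j i x := by
    intro i x
    unfold margX
    calc ∑ y, P i (x, y) = ∑ y, ∑ j, lam j * (a j i x * b j i y) := by
          refine Finset.sum_congr rfl fun y _ => hP i (x, y)
      _ = ∑ j, ∑ y, lam j * a j i x * b j i y := by
          rw [Finset.sum_comm]; exact Finset.sum_congr rfl fun j _ =>
            Finset.sum_congr rfl fun y _ => by ring
      _ = ∑ j, lam j * a j i x := by
          refine Finset.sum_congr rfl fun j _ => ?_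
          rw [← Finset.mul_sum, hb1 j i, mul_one]
  -- chain-rule-style bound for each i
  have step : ∀ i, shannon (fun x => margX (P i) x) + ∑ j, lam j * shannon (b j i)
      ≤ shannon (P i) := by
    intro i
    -- pointwise inequality
    have point : ∀ x y, P i (x, y) * Real.logb 2 (P i (x, y))
        - P i (x, y) * Real.logb 2 (margX (P i) x)
        ≤ ∑ j, lam j * a j i x * b j i y * Real.logb 2 (b j i y) := by
      intro x y
      have hkey := key_logsum2 (fun j => lam j * a j i x) (fun j => b j i y)
        (fun j => mul_nonneg (hlam0 j) (ha0 j i x)) (fun j => hb0 j i y)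
      have hPe : P i (x, y) = ∑ j, lam j * a j i x * b j i y := by
        rw [hP i (x, y)]; exact Finset.sum_congr rfl fun j _ => by ring
      rw [hPe, hmarg i x]
      exact hkey
    -- rewrite the three entropies as double/triple sums
    have hS1 : shannon (P i) = -∑ x, ∑ y, P i (x, y) * Real.logb 2 (P i (x, y)) := by
      unfold shannon; rw [Fintype.sum_prod_type]
    have hS2 : shannon (fun x => margX (P i) x)
        = -∑ x, ∑ y, P i (x, y) * Real.logb 2 (margX (P i) x) := by
      unfold shannon
      congr 1
      refine Finset.sum_congr rfl fun x _ => ?_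
      have hMx : margX (P i) x = ∑ y, P i (x, y) := rfl
      show margX (P i) x * Real.logb 2 (margX (P i) x)
        = ∑ y, P i (x, y) * Real.logb 2 (margX (P i) x)
      rw [← Finset.sum_mul, ← hMx]
    have hS3 : ∑ j, lam j * shannon (b j i)
        = -∑ x, ∑ y, ∑ j, lam j * a j i x * b j i y * Real.logb 2 (b j i y) := by
      have swap : ∑ x, ∑ y, ∑ j, lam j * a j i x * b j i y * Real.logb 2 (b j i y)
          = ∑ j, ∑ x, ∑ y, lam j * a j i x * b j i y * Real.logb 2 (b j i y) := by
        calc ∑ x, ∑ y, ∑ j, lam j * a j i x * b j i y * Real.logb 2 (b j i y)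
            = ∑ x, ∑ j, ∑ y, lam j * a j i x * b j i y * Real.logb 2 (b j i y) :=
              Finset.sum_congr rfl fun x _ => Finset.sum_comm
          _ = ∑ j, ∑ x, ∑ y, lam j * a j i x * b j i y * Real.logb 2 (b j i y) :=
              Finset.sum_comm
      rw [swap, ← Finset.sum_neg_distrib]
      refine Finset.sum_congr rfl fun j _ => ?_
      unfold shannon
      rw [mul_neg, neg_inj, Finset.mul_sum]
      calc ∑ y, lam j * (b j i y * Real.logb 2 (b j i y))
          = ∑ y, (∑ x, a j i x) * (lam j * (b j i y * Real.logb 2 (b j i y))) := by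
            rw [ha1 j i]; simp
        _ = ∑ x, ∑ y, lam j * a j i x * b j i y * Real.logb 2 (b j i y) := by
            rw [Finset.sum_comm]
            refine Finset.sum_congr rfl fun y _ => ?_
            rw [Finset.sum_mul]
            exact Finset.sum_congr rfl fun x _ => by ring
    rw [hS1, hS2, hS3]
    have hsum : ∑ x, ∑ y, (P i (x, y) * Real.logb 2 (P i (x, y))
        - P i (x, y) * Real.logb 2 (margX (P i) x))
        ≤ ∑ x, ∑ y, ∑ j, lam j * a j i x * b j i y * Real.logb 2 (b j i y) :=
      Finset.sum_le_sum fun x _ => Finset.sum_le_sum fun y _ => point x y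
    have hsplit : ∑ x, ∑ y, (P i (x, y) * Real.logb 2 (P i (x, y))
        - P i (x, y) * Real.logb 2 (margX (P i) x))
        = (∑ x, ∑ y, P i (x, y) * Real.logb 2 (P i (x, y)))
          - ∑ x, ∑ y, P i (x, y) * Real.logb 2 (margX (P i) x) := by
      rw [← Finset.sum_sub_distrib]
      exact Finset.sum_congr rfl fun x _ => Finset.sum_sub_distrib _ _
    rw [hsplit] at hsum
    linarith
  -- put everything together
  have total : (∑ i, shannon (fun x => margX (P i) x))
      + ∑ i, ∑ j, lam j * shannon (b j i) ≤ ∑ i, shannon (P i) := by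
    rw [← Finset.sum_add_distrib]
    exact Finset.sum_le_sum fun i _ => step i
  have hB : fB ≤ ∑ i, ∑ j, lam j * shannon (b j i) := by
    rw [Finset.sum_comm]
    calc fB = ∑ j, lam j * fB := by rw [← Finset.sum_mul, hlam1, one_mul]
      _ ≤ ∑ j, lam j * ∑ i, shannon (b j i) :=
          Finset.sum_le_sum fun j _ => mul_le_mul_of_nonneg_left (hfb j) (hlam0 j)
      _ = ∑ j, ∑ i, lam j * shannon (b j i) := by
          exact Finset.sum_congr rfl fun j _ => Finset.mul_sum _ _ _
  linarith
end

section
/- For a single qubit pure state, let p_x, p_y, p_z be the outcome distributions of the Pauli measurements σ_x, σ_y, σ_z. Then H(p_x) + H(p_y) + H(p_z) ≥ 2, with equality attained by eigenstates of one of the Pauli operators. -/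
open Finset

/-- Outcome distribution of a ±1 Pauli measurement on a qubit with Bloch component r. -/
noncomputable def pauliDist (r : ℝ) : Bool → ℝ :=
  fun s => if s then (1 + r) / 2 else (1 - r) / 2

section EURaux
open Real

noncomputable def F (r : ℝ) : ℝ := Real.binEntropy ((1 + r) / 2) - (1 - r ^ 2) * Real.log 2

noncomputable def F' (r : ℝ) : ℝ :=
  (Real.log ((1 - r) / 2) - Real.log ((1 + r) / 2)) / 2 + 2 * r * Real.log 2

noncomputable def F'' (r : ℝ) : ℝ := -1 / (1 - r ^ 2) + 2 * Real.log 2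

lemma hasDerivAt_F {r : ℝ} (h1 : -1 < r) (h2 : r < 1) : HasDerivAt F (F' r) r := by
  have hp0 : (1 + r) / 2 ≠ 0 := by intro h; rw [div_eq_zero_iff] at h; simp at h; linarith
  have hp1 : (1 + r) / 2 ≠ 1 := by intro h; rw [div_eq_one_iff_eq (by norm_num)] at h; linarith
  have hg : HasDerivAt (fun r : ℝ => (1 + r) / 2) (1 / 2) r := by
    simpa using ((hasDerivAt_id r).const_add 1).div_const 2
  have h1' := (Real.hasDerivAt_binEntropy hp0 hp1).comp r hg
  have h2' : HasDerivAt (fun r : ℝ => (1 - r ^ 2) * Real.log 2) (-(2 * r) * Real.log 2) r := by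
    simpa using ((hasDerivAt_pow 2 r).const_sub 1).mul_const (Real.log 2)
  have := h1'.sub h2'
  have he : (1 : ℝ) - (1 + r) / 2 = (1 - r) / 2 := by ring
  rw [he] at this
  refine this.congr_deriv ?_
  unfold F'
  ring

lemma hasDerivAt_F' {r : ℝ} (h1 : -1 < r) (h2 : r < 1) : HasDerivAt F' (F'' r) r := by
  have hm : (1 - r) / 2 ≠ 0 := by intro h; rw [div_eq_zero_iff] at h; simp at h; linarith
  have hp : (1 + r) / 2 ≠ 0 := by intro h; rw [div_eq_zero_iff] at h; simp at h; linarith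
  have hgm : HasDerivAt (fun r : ℝ => (1 - r) / 2) (-1 / 2) r := by
    simpa using ((hasDerivAt_id r).const_sub 1).div_const 2
  have hgp : HasDerivAt (fun r : ℝ => (1 + r) / 2) (1 / 2) r := by
    simpa using ((hasDerivAt_id r).const_add 1).div_const 2
  have hlm := hgm.log hm
  have hlp := hgp.log hp
  have hr : HasDerivAt (fun r : ℝ => 2 * r * Real.log 2) (2 * Real.log 2) r := by
    simpa using ((hasDerivAt_id r).const_mul 2).mul_const (Real.log 2)
  have := ((hlm.sub hlp).div_const 2).add hr
  refine this.congr_deriv ?_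
  unfold F''
  have hs : (1 : ℝ) - r ^ 2 ≠ 0 := by nlinarith
  have hm' : (1 : ℝ) - r ≠ 0 := by linarith
  have hp' : (1 : ℝ) + r ≠ 0 := by linarith
  field_simp
  ring

noncomputable def r0 : ℝ := Real.sqrt (1 - 1 / (2 * Real.log 2))

lemma hL : (0.6931471803 : ℝ) < Real.log 2 := Real.log_two_gt_d9
lemma hr0sq : r0 ^ 2 = 1 - 1 / (2 * Real.log 2) := by
  rw [r0, Real.sq_sqrt]
  have := hL
  rw [sub_nonneg, div_le_one (by linarith)]
  linarith

lemma hr0_nonneg : 0 ≤ r0 := Real.sqrt_nonneg _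
lemma hr0_lt_one : r0 < 1 := by
  have h := hr0sq
  have h2 : r0 ^ 2 < 1 := by
    have := hL
    have : 0 < 1 / (2 * Real.log 2) := by positivity
    linarith
  nlinarith [hr0_nonneg]

lemma F_zero : F 0 = 0 := by
  have : ((1 : ℝ) + 0) / 2 = 2⁻¹ := by norm_num
  simp [F, this, Real.binEntropy_two_inv]

lemma F_one : F 1 = 0 := by
  have : ((1 : ℝ) + 1) / 2 = 1 := by norm_num
  simp [F, this]

lemma F'_zero : F' 0 = 0 := by simp [F']

lemma keyA : ∀ r ∈ Set.Icc (0 : ℝ) r0, 0 ≤ F r := by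
  have hsub : Set.Icc (0 : ℝ) r0 ⊆ Set.Ioo (-1 : ℝ) 1 := fun x hx =>
    ⟨by linarith [hx.1], lt_of_le_of_lt hx.2 hr0_lt_one⟩
  have hmono' : MonotoneOn F' (Set.Icc (0 : ℝ) r0) := by
    apply monotoneOn_of_deriv_nonneg (convex_Icc 0 r0)
    · exact fun x hx => ((hasDerivAt_F' (hsub hx).1 (hsub hx).2).continuousAt).continuousWithinAt
    · rw [interior_Icc]
      exact fun x hx => (hasDerivAt_F' (by linarith [hx.1])
        (lt_trans hx.2 hr0_lt_one)).differentiableAt.differentiableWithinAt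
    · rw [interior_Icc]
      intro x hx
      rw [(hasDerivAt_F' (by linarith [hx.1]) (lt_trans hx.2 hr0_lt_one)).deriv]
      have hx2 : x ^ 2 < r0 ^ 2 := by nlinarith [hx.1, hx.2, hr0_nonneg]
      have h1 : 0 < 1 - x ^ 2 := by nlinarith [hr0_lt_one, hr0_nonneg]
      have h2 : 1 / (2 * Real.log 2) ≤ 1 - x ^ 2 := by
        have := hr0sq; nlinarith
      have hl2 : (0 : ℝ) < Real.log 2 := by linarith [hL]
      rw [F'', neg_div, neg_add_eq_sub, sub_nonneg, div_le_iff₀ h1]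
      rw [div_le_iff₀ (by positivity)] at h2
      nlinarith
  have hF'_nonneg : ∀ x ∈ Set.Icc (0 : ℝ) r0, 0 ≤ F' x := by
    intro x hx
    have := hmono' (Set.left_mem_Icc.mpr hr0_nonneg) hx hx.1
    rwa [F'_zero] at this
  have hmono : MonotoneOn F (Set.Icc (0 : ℝ) r0) := by
    apply monotoneOn_of_deriv_nonneg (convex_Icc 0 r0)
    · exact fun x hx => ((hasDerivAt_F (hsub hx).1 (hsub hx).2).continuousAt).continuousWithinAt
    · rw [interior_Icc]
      exact fun x hx => (hasDerivAt_F (by linarith [hx.1])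
        (lt_trans hx.2 hr0_lt_one)).differentiableAt.differentiableWithinAt
    · rw [interior_Icc]
      intro x hx
      rw [(hasDerivAt_F (by linarith [hx.1]) (lt_trans hx.2 hr0_lt_one)).deriv]
      exact hF'_nonneg x ⟨le_of_lt hx.1, le_of_lt hx.2⟩
  intro r hr
  have := hmono (Set.left_mem_Icc.mpr hr0_nonneg) hr hr.1
  rwa [F_zero] at this

lemma keyB : ∀ r ∈ Set.Icc r0 1, 0 ≤ F r := by
  have hconc : ConcaveOn ℝ (Set.Icc r0 1) F := by
    apply concaveOn_of_deriv2_nonpos (convex_Icc r0 1)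
    · apply Continuous.continuousOn
      unfold F
      fun_prop
    · rw [interior_Icc]
      exact fun x hx => (hasDerivAt_F (by linarith [hr0_nonneg, hx.1])
        hx.2).differentiableAt.differentiableWithinAt
    · rw [interior_Icc]
      intro x hx
      have hx1 : -1 < x := by linarith [hr0_nonneg, hx.1]
      have hev : deriv F =ᶠ[nhds x] F' := by
        filter_upwards [Ioo_mem_nhds hx1 hx.2] with y hy
        exact (hasDerivAt_F hy.1 hy.2).deriv
      exact (Filter.EventuallyEq.differentiableAt_iff hev).mpr
        (hasDerivAt_F' hx1 hx.2).differentiableAt |>.differentiableWithinAt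
    · rw [interior_Icc]
      intro x hx
      have hx1 : -1 < x := by linarith [hr0_nonneg, hx.1]
      have hev : deriv F =ᶠ[nhds x] F' := by
        filter_upwards [Ioo_mem_nhds hx1 hx.2] with y hy
        exact (hasDerivAt_F hy.1 hy.2).deriv
      have : deriv^[2] F x = deriv F' x := by
        simp only [Function.iterate_succ, Function.iterate_zero, Function.comp_apply, id]
        exact Filter.EventuallyEq.deriv_eq hev
      rw [this, (hasDerivAt_F' hx1 hx.2).deriv]
      have hx2 : r0 ^ 2 < x ^ 2 := by nlinarith [hx.1, hr0_nonneg]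
      have h1 : 0 < 1 - x ^ 2 := by nlinarith [hx.2, hr0_nonneg, hx.1]
      have h2 : 1 - x ^ 2 < 1 / (2 * Real.log 2) := by
        have := hr0sq; nlinarith
      have hl2 : (0 : ℝ) < Real.log 2 := by linarith [hL]
      rw [lt_div_iff₀ (by positivity)] at h2
      show -1 / (1 - x ^ 2) + 2 * Real.log 2 ≤ 0
      rw [neg_div, neg_add_eq_sub, sub_nonpos, le_div_iff₀ h1]
      nlinarith
  intro r hr
  have hd : 0 < 1 - r0 := by linarith [hr0_lt_one]
  set a : ℝ := (1 - r) / (1 - r0) with ha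
  set b : ℝ := (r - r0) / (1 - r0) with hb
  have ha0 : 0 ≤ a := by apply div_nonneg; linarith [hr.2]; linarith
  have hb0 : 0 ≤ b := by apply div_nonneg; linarith [hr.1]; linarith
  have hab : a + b = 1 := by
    rw [ha, hb, ← add_div, div_eq_one_iff_eq hd.ne']; ring
  have hcomb : a • r0 + b • 1 = r := by
    rw [smul_eq_mul, smul_eq_mul, ha, hb, mul_one, div_mul_eq_mul_div, ← add_div,
      div_eq_iff hd.ne']
    ring
  have := hconc.2 (Set.left_mem_Icc.mpr (le_of_lt hr0_lt_one))
    (Set.right_mem_Icc.mpr (le_of_lt hr0_lt_one)) ha0 hb0 hab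
  rw [hcomb] at this
  have hFr0 : 0 ≤ F r0 := keyA r0 (Set.right_mem_Icc.mpr hr0_nonneg)
  have hF1 : F 1 = 0 := F_one
  calc (0:ℝ) ≤ a • F r0 + b • F 1 := by
        rw [hF1, smul_zero, add_zero]; exact smul_nonneg ha0 hFr0
    _ ≤ F r := this

lemma keyNN (r : ℝ) (h0 : 0 ≤ r) (h1 : r ≤ 1) : 0 ≤ F r := by
  rcases le_or_gt r r0 with h | h
  · exact keyA r ⟨h0, h⟩
  · exact keyB r ⟨le_of_lt h, h1⟩

lemma key (r : ℝ) (hr : r ^ 2 ≤ 1) :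
    (1 - r ^ 2) * Real.log 2 ≤ Real.binEntropy ((1 + r) / 2) := by
  have hm1 : -1 ≤ r := by nlinarith
  have hp1 : r ≤ 1 := by nlinarith
  rcases le_or_gt 0 r with h | h
  · have := keyNN r h hp1
    unfold F at this
    linarith
  · have := keyNN (-r) (by linarith) (by linarith)
    unfold F at this
    have he : (1 + -r) / 2 = 1 - (1 + r) / 2 := by ring
    rw [he, Real.binEntropy_one_sub] at this
    have he2 : (-r) ^ 2 = r ^ 2 := by ring
    rw [he2] at this
    linarith

end EURaux


lemma shannon_pauli (r : ℝ) :
    shannon (pauliDist r) * Real.log 2 = Real.binEntropy ((1 + r) / 2) := by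
  have h : (1 : ℝ) - (1 + r) / 2 = (1 - r) / 2 := by ring
  simp only [shannon, pauliDist, Fintype.sum_bool, if_true, Bool.false_eq_true, if_false,
    Real.binEntropy, h, Real.log_inv, Real.logb]
  have h2 : Real.log 2 ≠ 0 := by positivity
  field_simp
  ring


lemma shannon_pauli_ge (r : ℝ) (hr : r ^ 2 ≤ 1) : 1 - r ^ 2 ≤ shannon (pauliDist r) := by
  have hlog : (0 : ℝ) < Real.log 2 := Real.log_pos (by norm_num)
  have h := key r hr
  rw [← shannon_pauli r] at h
  exact le_of_mul_le_mul_right h hlog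

lemma shannon_pauli_zero : shannon (pauliDist 0) = 1 := by
  have h : Real.logb 2 ((1:ℝ) / 2) = -1 := by
    rw [one_div, Real.logb, Real.log_inv, neg_div, div_self (by positivity : Real.log 2 ≠ 0)]
  simp only [shannon, pauliDist, Fintype.sum_bool, reduceIte, Bool.false_eq_true, if_false, if_true, add_zero, sub_zero, h]
  ring

lemma shannon_pauli_abs_one (r : ℝ) (hr : |r| = 1) : shannon (pauliDist r) = 0 := by
  rcases abs_eq (by norm_num : (0:ℝ) ≤ 1) |>.mp hr with h | h <;> subst h <;>
    simp [shannon, pauliDist, Fintype.sum_bool]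

theorem stmt_7 (rx ry rz : ℝ) (hunit : rx ^ 2 + ry ^ 2 + rz ^ 2 = 1) :
    2 ≤ shannon (pauliDist rx) + shannon (pauliDist ry) + shannon (pauliDist rz) ∧
    ((|rx| = 1 ∨ |ry| = 1 ∨ |rz| = 1) →
      shannon (pauliDist rx) + shannon (pauliDist ry) + shannon (pauliDist rz) = 2) := by
  have hx2 : rx ^ 2 ≤ 1 := by nlinarith [sq_nonneg ry, sq_nonneg rz]
  have hy2 : ry ^ 2 ≤ 1 := by nlinarith [sq_nonneg rx, sq_nonneg rz]
  have hz2 : rz ^ 2 ≤ 1 := by nlinarith [sq_nonneg rx, sq_nonneg ry]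
  constructor
  · have h1 := shannon_pauli_ge rx hx2
    have h2 := shannon_pauli_ge ry hy2
    have h3 := shannon_pauli_ge rz hz2
    linarith
  · rintro (h | h | h)
    · have hx : rx ^ 2 = 1 := by rw [← sq_abs, h]; norm_num
      have hy : ry = 0 := by nlinarith [sq_nonneg ry, sq_nonneg rz]
      have hz : rz = 0 := by nlinarith [sq_nonneg ry, sq_nonneg rz]
      rw [hy, hz, shannon_pauli_abs_one rx h, shannon_pauli_zero]; norm_num
    · have hy : ry ^ 2 = 1 := by rw [← sq_abs, h]; norm_num
      have hx : rx = 0 := by nlinarith [sq_nonneg rx, sq_nonneg rz]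
      have hz : rz = 0 := by nlinarith [sq_nonneg rx, sq_nonneg rz]
      rw [hx, hz, shannon_pauli_abs_one ry h, shannon_pauli_zero]; norm_num
    · have hz : rz ^ 2 = 1 := by rw [← sq_abs, h]; norm_num
      have hx : rx = 0 := by nlinarith [sq_nonneg rx, sq_nonneg ry]
      have hy : ry = 0 := by nlinarith [sq_nonneg rx, sq_nonneg ry]
      rw [hx, hy, shannon_pauli_abs_one rz h, shannon_pauli_zero]; norm_num
end

section
/- For 0 < ε < 1, with ε̄ = 2ε√(1-ε²), the quantity -½(1-ε̄)log₂(¼(1-ε̄)) - ½(1+ε̄)log₂(¼(1+ε̄)) is strictly less than 2. -/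
lemma aux_pos (t : ℝ) (ht0 : 0 < t) (ht1 : t ≤ 1) :
    0 < (1 - t) * Real.log (1 - t) + (1 + t) * Real.log (1 + t) := by
  have h := Real.strictConvexOn_mul_log.2
    (show (1 - t) ∈ Set.Ici (0:ℝ) by simp only [Set.mem_Ici]; linarith)
    (show (1 + t) ∈ Set.Ici (0:ℝ) by simp only [Set.mem_Ici]; linarith)
    (show (1 - t) ≠ (1 + t) by intro h; nlinarith)
    (show (0:ℝ) < 1/2 by norm_num) (show (0:ℝ) < 1/2 by norm_num)
    (show (1:ℝ)/2 + 1/2 = 1 by norm_num)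
  have : (1/2 : ℝ) • (1 - t) + (1/2 : ℝ) • (1 + t) = 1 := by rw [smul_eq_mul, smul_eq_mul]; ring
  rw [this] at h
  simp only [smul_eq_mul, Real.log_one, mul_one] at h
  linarith

lemma aux (t : ℝ) (ht0 : 0 < t) (ht1 : t ≤ 1) :
    -(1 / 2) * (1 - t) * Real.logb 2 ((1 / 4) * (1 - t))
      - (1 / 2) * (1 + t) * Real.logb 2 ((1 / 4) * (1 + t)) < 2 := by
  rcases eq_or_lt_of_le ht1 with h1 | h1
  · subst h1
    have : ((1:ℝ)/4) * (1 + 1) = 2⁻¹ := by norm_num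
    rw [this, Real.logb_inv, Real.logb_self_eq_one (by norm_num : (1:ℝ) < 2)]
    norm_num
  · have hm : (0:ℝ) < 1 - t := by linarith
    have hp : (0:ℝ) < 1 + t := by linarith
    have l2 : (0:ℝ) < Real.log 2 := Real.log_pos (by norm_num)
    have e1 : Real.logb 2 ((1 / 4) * (1 - t)) = Real.logb 2 (1 - t) - 2 := by
      rw [Real.logb_mul (by norm_num) (ne_of_gt hm)]
      have : Real.logb 2 ((1:ℝ)/4) = -2 := by
        rw [show ((1:ℝ)/4) = (2:ℝ) ^ (-2 : ℤ) by norm_num, Real.logb, Real.log_zpow]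
        push_cast
        field_simp
      rw [this]; ring
    have e2 : Real.logb 2 ((1 / 4) * (1 + t)) = Real.logb 2 (1 + t) - 2 := by
      rw [Real.logb_mul (by norm_num) (ne_of_gt hp)]
      have : Real.logb 2 ((1:ℝ)/4) = -2 := by
        rw [show ((1:ℝ)/4) = (2:ℝ) ^ (-2 : ℤ) by norm_num, Real.logb, Real.log_zpow]
        push_cast
        field_simp
      rw [this]; ring
    rw [e1, e2]
    have hpos := aux_pos t ht0 ht1
    have hb : 0 < (1 - t) * Real.logb 2 (1 - t) + (1 + t) * Real.logb 2 (1 + t) := by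
      unfold Real.logb
      rw [div_eq_mul_inv, div_eq_mul_inv]
      have : (1 - t) * (Real.log (1 - t) * (Real.log 2)⁻¹)
          + (1 + t) * (Real.log (1 + t) * (Real.log 2)⁻¹)
          = ((1 - t) * Real.log (1 - t) + (1 + t) * Real.log (1 + t)) * (Real.log 2)⁻¹ := by
        ring
      rw [this]
      positivity
    nlinarith

theorem stmt_12 (ε : ℝ) (hε0 : 0 < ε) (hε1 : ε < 1) :
    -(1 / 2) * (1 - 2 * ε * Real.sqrt (1 - ε ^ 2)) *
        Real.logb 2 ((1 / 4) * (1 - 2 * ε * Real.sqrt (1 - ε ^ 2)))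
      - (1 / 2) * (1 + 2 * ε * Real.sqrt (1 - ε ^ 2)) *
        Real.logb 2 ((1 / 4) * (1 + 2 * ε * Real.sqrt (1 - ε ^ 2))) < 2 := by
  set s := Real.sqrt (1 - ε ^ 2) with hs
  have hs0 : 0 < s := Real.sqrt_pos.mpr (by nlinarith)
  have hs2 : s ^ 2 = 1 - ε ^ 2 := Real.sq_sqrt (by nlinarith)
  have ht0 : 0 < 2 * ε * s := by positivity
  have ht1 : 2 * ε * s ≤ 1 := by nlinarith [sq_nonneg (ε - s)]
  exact aux _ ht0 ht1
end

section
/- Let |ψ_λ⟩ = ∑_{i=0}^{d-1} λ_i |ii⟩ with all λ_i > 0 and ∑ λ_i² = 1. Let A₂, B₂ be the Fourier-transformed bases, with joint outcome probabilities p(j,k) = |⟨f_j ⊗ f_k | ψ_λ⟩|² where |f_j⟩ = (1/√d)∑_m ω^{jm}|m⟩, ω = e^{2πi/d}. Then p(j,k) = |∑_m λ_m ω^{-(j+k)m}|²/d², and p is the uniform distribution on d² outcomes only if exactly one λ_i is nonzero; hence for the given states H(A₂,B₂) < 2 log₂ d. -/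
open Finset

theorem stmt_14 (d : ℕ) (hd : 2 ≤ d)
    (lam : Fin d → ℝ) (hpos : ∀ i, 0 < lam i) (hsum : ∑ i, lam i ^ 2 = 1)
    (ω : ℂ) (hω : ω = Complex.exp (2 * Real.pi * Complex.I / d))
    (p : Fin d × Fin d → ℝ)
    (hp : ∀ j k : Fin d, p (j, k) =
      ‖∑ m : Fin d, (lam m : ℂ) * ω ^ (-(((j : ℤ) + (k : ℤ)) * (m : ℤ)))‖ ^ 2
        / (d : ℝ) ^ 2) :
    ((∀ z : Fin d × Fin d, p z = 1 / (d ^ 2 : ℝ)) → ∃! i, lam i ≠ 0) ∧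
    shannon p < 2 * Real.logb 2 d := by
  have hd0 : d ≠ 0 := by omega
  haveI : NeZero d := ⟨hd0⟩
  have hdR : (0:ℝ) < d := by exact_mod_cast Nat.pos_of_ne_zero hd0
  have hprim : IsPrimitiveRoot ω d := by
    rw [hω]; exact Complex.isPrimitiveRoot_exp d hd0
  have hne : ω ≠ 0 := hprim.ne_zero hd0
  have hzpow : ∀ a b : ℤ, (d:ℤ) ∣ a - b → ω ^ a = ω ^ b := by
    intro a b hab
    have h1 : ω ^ (a - b) = 1 := (hprim.zpow_eq_one_iff_dvd _).mpr hab
    calc ω ^ a = ω ^ (a - b) * ω ^ b := by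
          rw [← zpow_add₀ hne]; congr 1; ring
      _ = ω ^ b := by rw [h1, one_mul]
  have habs : ‖ω‖ = 1 := by
    have h2 : (2 * Real.pi * Complex.I / d) = ((2*Real.pi/d : ℝ)) * Complex.I := by
      push_cast; ring
    rw [hω, h2, Complex.norm_exp]
    simp
  have hconj : ∀ z : ℤ, (starRingEnd ℂ) (ω ^ z) = ω ^ (-z) := by
    intro z
    rw [map_zpow₀, ← Complex.inv_eq_conj habs, inv_zpow, ← zpow_neg]
  -- orthogonality
  have horth : ∀ s : ℤ, ∑ t : Fin d, ω ^ ((t:ℤ) * s) = if (d:ℤ) ∣ s then (d:ℂ) else 0 := by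
    intro s
    have hterm : ∀ t : Fin d, ω ^ ((t:ℤ) * s) = (ω ^ s) ^ (t:ℕ) := by
      intro t
      rw [mul_comm, zpow_mul, zpow_natCast]
    by_cases hdvd : (d:ℤ) ∣ s
    · simp only [if_pos hdvd]
      have hs1 : ω ^ s = 1 := (hprim.zpow_eq_one_iff_dvd _).mpr hdvd
      simp [hterm, hs1]
    · simp only [if_neg hdvd]
      have hs1 : ω ^ s ≠ 1 := fun h => hdvd ((hprim.zpow_eq_one_iff_dvd _).mp h)
      rw [Fin.sum_univ_eq_sum_range (fun t => ω ^ ((t:ℤ) * s))]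
      have : ∀ t ∈ Finset.range d, ω ^ ((t:ℤ) * s) = (ω ^ s) ^ t := fun t _ => by
        rw [mul_comm, zpow_mul, zpow_natCast]
      rw [Finset.sum_congr rfl this, geom_sum_eq hs1]
      have hnum : (ω ^ s) ^ d - 1 = 0 := by
        rw [← zpow_natCast, ← zpow_mul, mul_comm, zpow_mul,
          (hprim.zpow_eq_one_iff_dvd _).mpr ⟨1, (mul_one _).symm⟩, one_zpow, sub_self]
      rw [hnum, zero_div]
  set F : ℤ → ℂ := fun t => ∑ m : Fin d, (lam m : ℂ) * ω ^ (-(t * (m:ℤ))) with hF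
  have hpF : ∀ j k : Fin d, p (j,k) = ‖F ((j:ℤ)+(k:ℤ))‖^2 / (d:ℝ)^2 := by
    intro j k; rw [hp j k]
  have hFper : ∀ a b : ℤ, (d:ℤ) ∣ a - b → F a = F b := by
    intro a b hab
    refine Finset.sum_congr rfl fun m _ => ?_
    congr 1
    refine hzpow _ _ ?_
    have h := hab.mul_right (m:ℤ)
    rw [show -(a*(m:ℤ)) - -(b*(m:ℤ)) = -((a-b)*(m:ℤ)) by ring]
    exact dvd_neg.mpr h
  -- not-divisible for distinct indices
  have hndvd : ∀ m n : Fin d, m ≠ n → ¬ (d:ℤ) ∣ ((n:ℤ) - (m:ℤ)) := by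
    intro m n hmn hdvd
    have h0 : (n:ℤ) - (m:ℤ) = 0 := by
      refine Int.eq_zero_of_abs_lt_dvd hdvd ?_
      have hm := m.isLt; have hn := n.isLt
      rw [abs_sub_lt_iff]
      constructor <;> [skip; skip] <;> push_cast <;> omega
    apply hmn
    have : (m:ℤ) = (n:ℤ) := by omega
    exact Fin.ext (by exact_mod_cast this)
  -- Parseval over one period
  have hPar : ∑ t : Fin d, ‖F (t:ℤ)‖ ^ 2 = d := by
    have expand : ∀ t : Fin d, F (t:ℤ) * (starRingEnd ℂ) (F (t:ℤ))
        = ∑ m : Fin d, ∑ n : Fin d,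
            ((lam m : ℂ) * (lam n : ℂ)) * ω ^ (((t:ℤ)) * ((n:ℤ) - (m:ℤ))) := by
      intro t
      rw [hF]
      simp only
      rw [map_sum, Finset.sum_mul_sum]
      refine Finset.sum_congr rfl fun m _ => Finset.sum_congr rfl fun n _ => ?_
      rw [map_mul, hconj, Complex.conj_ofReal, mul_mul_mul_comm, ← zpow_add₀ hne]
      congr 2
      ring
    have key : ∑ t : Fin d, (F (t:ℤ) * (starRingEnd ℂ) (F (t:ℤ))) = (d:ℂ) := by
      rw [Finset.sum_congr rfl (fun t _ => expand t)]
      rw [Finset.sum_comm]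
      have inner : ∀ m : Fin d, (∑ t : Fin d, ∑ n : Fin d,
          ((lam m : ℂ) * (lam n : ℂ)) * ω ^ (((t:ℤ)) * ((n:ℤ) - (m:ℤ))))
          = ((lam m : ℂ) * (lam m : ℂ)) * d := by
        intro m
        rw [Finset.sum_comm]
        have hinner2 : ∀ n : Fin d, (∑ t : Fin d,
            ((lam m : ℂ) * (lam n : ℂ)) * ω ^ (((t:ℤ)) * ((n:ℤ) - (m:ℤ))))
            = ((lam m : ℂ) * (lam n : ℂ)) * (if (d:ℤ) ∣ ((n:ℤ) - (m:ℤ)) then (d:ℂ) else 0) := by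
          intro n
          rw [← Finset.mul_sum, horth]
        rw [Finset.sum_congr rfl (fun n _ => hinner2 n)]
        rw [Finset.sum_eq_single m]
        · rw [if_pos (by simp)]
        · intro n _ hn
          rw [if_neg (hndvd m n (Ne.symm hn)), mul_zero]
        · intro habs'; exact absurd (Finset.mem_univ m) habs'
      rw [Finset.sum_congr rfl (fun m _ => inner m)]
      rw [← Finset.sum_mul]
      have hc : (∑ m : Fin d, (lam m : ℂ) * (lam m : ℂ)) = ((∑ i, lam i ^ 2 : ℝ) : ℂ) := by
        push_cast
        exact Finset.sum_congr rfl fun m _ => by ring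
      rw [hc, hsum, Complex.ofReal_one, one_mul]
    have key2 : ((∑ t : Fin d, ‖F (t:ℤ)‖ ^ 2 : ℝ) : ℂ) = (d:ℂ) := by
      push_cast
      rw [← key]
      refine Finset.sum_congr rfl fun t _ => ?_
      rw [Complex.mul_conj]
      norm_cast
      exact Complex.sq_norm _
    exact_mod_cast key2
  -- total probability is 1
  have hsumP : ∑ z : Fin d × Fin d, p z = 1 := by
    rw [Fintype.sum_prod_type]
    have hrow : ∀ j : Fin d, ∑ k : Fin d, p (j, k) = (d:ℝ) / (d:ℝ)^2 := by
      intro j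
      have hbij : ∑ k : Fin d, ‖F ((j:ℤ)+(k:ℤ))‖^2
          = ∑ t : Fin d, ‖F (t:ℤ)‖^2 := by
        refine Fintype.sum_bijective (fun k : Fin d => j + k)
          (Equiv.addLeft j).bijective _ _ fun k => ?_
        have hper : F ((j:ℤ)+(k:ℤ)) = F (((j + k : Fin d):ℤ)) := by
          apply hFper
          have hval : ((j + k : Fin d) : ℤ) = (((j:ℕ) + (k:ℕ)) % d : ℕ) := by
            rw [Fin.val_add]
          rw [hval]
          exact Int.dvd_self_sub_of_emod_eq (by push_cast; rfl)
        rw [hper]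
      rw [Finset.sum_congr rfl (fun k _ => hpF j k), ← Finset.sum_div, hbij, hPar]
    rw [Finset.sum_congr rfl (fun j _ => hrow j), Finset.sum_const, Finset.card_univ,
      Fintype.card_fin, nsmul_eq_mul]
    field_simp
  -- value at (0,0)
  have hp00 : p (0,0) = (∑ i, lam i)^2 / (d:ℝ)^2 := by
    rw [hpF 0 0]
    congr 1
    have h00 : F (((0:Fin d):ℤ) + ((0:Fin d):ℤ)) = ((∑ i, lam i : ℝ) : ℂ) := by
      rw [hF]
      simp
    rw [h00, Complex.norm_real, Real.norm_eq_abs, sq_abs]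
  have hSpos : 0 < ∑ i, lam i := Finset.sum_pos (fun i _ => hpos i) ⟨0, Finset.mem_univ 0⟩
  have hlam : ∀ i : Fin d, lam i < ∑ j, lam j := by
    intro i
    obtain ⟨j, hj⟩ : ∃ j : Fin d, j ≠ i := by
      rcases Decidable.eq_or_ne i 0 with h | h
      · exact ⟨⟨1, by omega⟩, by simp [h, Fin.ext_iff]⟩
      · exact ⟨0, Ne.symm h⟩
    exact Finset.single_lt_sum hj (Finset.mem_univ i) (Finset.mem_univ j) (hpos j)
      (fun k _ _ => (hpos k).le)
  have hgt1 : 1 < (∑ i, lam i)^2 := by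
    have hlt : ∑ i, lam i ^ 2 < ∑ i, lam i * (∑ j, lam j) := by
      refine Finset.sum_lt_sum_of_nonempty ⟨0, Finset.mem_univ 0⟩ fun i _ => ?_
      have := mul_lt_mul_of_pos_left (hlam i) (hpos i)
      nlinarith [hpos i]
    rw [← Finset.sum_mul] at hlt
    nlinarith [hsum]
  have hp00gt : 1 / (d:ℝ)^2 < p (0,0) := by
    rw [hp00]
    exact (div_lt_div_iff_of_pos_right (by positivity)).mpr hgt1
  set q : ℝ := 1 / (d:ℝ)^2 with hqdef
  have hq : 0 < q := by rw [hqdef]; positivity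
  have hnn : ∀ z : Fin d × Fin d, 0 ≤ p z := by
    rintro ⟨j, k⟩
    rw [hpF j k]
    positivity
  have hkey : ∀ x : ℝ, 0 ≤ x → x * Real.log q + (x - q) ≤ x * Real.log x := by
    intro x hx
    rcases eq_or_lt_of_le hx with h0 | h0
    · rw [← h0]; simp; linarith [hq]
    · have hlog := Real.log_le_sub_one_of_pos (show 0 < q / x by positivity)
      rw [Real.log_div hq.ne' h0.ne'] at hlog
      have h2 := mul_le_mul_of_nonneg_left hlog hx
      have h3 : x * (q / x) = q := by rw [mul_comm]; exact div_mul_cancel₀ q h0.ne' 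
      nlinarith
  have hstrict : p (0,0) * Real.log q + (p (0,0) - q) < p (0,0) * Real.log (p (0,0)) := by
    have hx : 0 < p (0,0) := lt_trans hq hp00gt
    have hne1 : q / p (0,0) ≠ 1 := by
      intro h
      have := (div_eq_one_iff_eq hx.ne').mp h
      linarith [hp00gt]
    have hlog := Real.log_lt_sub_one_of_pos (show 0 < q / p (0,0) by positivity) hne1
    rw [Real.log_div hq.ne' hx.ne'] at hlog
    have h2 := mul_lt_mul_of_pos_left hlog hx
    have h3 : p (0,0) * (q / p (0,0)) = q := by
      rw [mul_comm]; exact div_mul_cancel₀ q hx.ne' 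
    nlinarith
  have hsum_lt : ∑ z : Fin d × Fin d, (p z * Real.log q + (p z - q))
      < ∑ z : Fin d × Fin d, p z * Real.log (p z) :=
    Finset.sum_lt_sum (fun z _ => hkey (p z) (hnn z)) ⟨(0,0), Finset.mem_univ _, hstrict⟩
  have hconst : ∑ _z : Fin d × Fin d, q = 1 := by
    rw [Finset.sum_const, Finset.card_univ, Fintype.card_prod, Fintype.card_fin,
      nsmul_eq_mul, hqdef]
    push_cast
    field_simp
  have hLHS : ∑ z : Fin d × Fin d, (p z * Real.log q + (p z - q)) = Real.log q := by
    rw [Finset.sum_add_distrib, Finset.sum_sub_distrib, ← Finset.sum_mul, hsumP, hconst, one_mul]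
    ring
  have hlogq : Real.log q = -(2 * Real.log d) := by
    rw [hqdef, one_div, Real.log_inv, Real.log_pow]
    push_cast
    ring
  have hS : -(2 * Real.log d) < ∑ z : Fin d × Fin d, p z * Real.log (p z) := by
    rw [← hlogq, ← hLHS]; exact hsum_lt
  have hlog2 : 0 < Real.log 2 := Real.log_pos one_lt_two
  constructor
  · intro huni
    exfalso
    have h1 := huni (0,0)
    rw [hp00] at h1
    rw [div_eq_div_iff (by positivity) (by positivity)] at h1
    have hd2 : (0:ℝ) < (d:ℝ)^2 := by positivity
    nlinarith [mul_pos (sub_pos.mpr hgt1) hd2]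
  · have hshannon : shannon p = -(∑ z : Fin d × Fin d, p z * Real.log (p z)) / Real.log 2 := by
      rw [shannon, neg_div, neg_inj]
      rw [Finset.sum_div Finset.univ (fun z : Fin d × Fin d => p z * Real.log (p z))
        (Real.log 2)]
      exact Finset.sum_congr rfl fun z _ => by rw [← Real.log_div_log]; ring
    rw [hshannon]
    have h2 : 2 * Real.logb 2 d = (2 * Real.log d) / Real.log 2 := by
      rw [← Real.log_div_log]; ring
    rw [h2]
    exact (div_lt_div_iff_of_pos_right hlog2).mpr (by linarith)
end

section
/- Suppose for each j = 1,...,L the joint distribution of (V₁ʲ, V₂ʲ, V₃ʲ) is a common convex combination ∑_i p_i (a_j^{(i)} ⊗ b_j^{(i)} ⊗ c_j^{(i)}) of triple product distributions (same weights for all j). If for every i the single-system sums satisfy ∑_j H(a_j^{(i)}) ≥ f₁, ∑_j H(b_j^{(i)}) ≥ f₂, ∑_j H(c_j^{(i)}) ≥ f₃, and the mixed first marginals satisfy ∑_j H(V₁ʲ) ≥ f₁, then ∑_{j=1}^L H(V₁ʲ, V₂ʲ, V₃ʲ) ≥ f₁ + f₂ + f₃. -/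
open Finset

lemma shannon_eq {α : Type*} [Fintype α] (p : α → ℝ) :
    shannon p = (∑ a, Real.negMulLog (p a)) / Real.log 2 := by
  simp only [shannon, Real.logb, Real.negMulLog, Finset.sum_div]
  rw [← Finset.sum_neg_distrib]
  congr 1; ext x; ring

lemma prod_negMulLog_sum {X Y Z : Type*} [Fintype X] [Fintype Y] [Fintype Z]
    (a : X → ℝ) (b : Y → ℝ) (c : Z → ℝ)
    (ha1 : ∑ x, a x = 1) (hb1 : ∑ y, b y = 1) (hc1 : ∑ z, c z = 1) :
    ∑ w : X × Y × Z, Real.negMulLog (a w.1 * (b w.2.1 * c w.2.2)) =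
      (∑ x, Real.negMulLog (a x)) + (∑ y, Real.negMulLog (b y)) +
        (∑ z, Real.negMulLog (c z)) := by
  simp only [Fintype.sum_prod_type, Real.negMulLog_mul, Finset.sum_add_distrib,
    ← Finset.sum_mul, ← Finset.mul_sum, ha1, hb1, hc1]
  ring

theorem stmt_16 {X Y Z J : Type*} [Fintype X] [Fintype Y] [Fintype Z] [Fintype J] (L : ℕ)
    (lam : J → ℝ) (hlam0 : ∀ j, 0 ≤ lam j) (hlam1 : ∑ j, lam j = 1)
    (a : J → Fin L → X → ℝ) (b : J → Fin L → Y → ℝ) (c : J → Fin L → Z → ℝ)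
    (ha0 : ∀ i j x, 0 ≤ a i j x) (ha1 : ∀ i j, ∑ x, a i j x = 1)
    (hb0 : ∀ i j y, 0 ≤ b i j y) (hb1 : ∀ i j, ∑ y, b i j y = 1)
    (hc0 : ∀ i j z, 0 ≤ c i j z) (hc1 : ∀ i j, ∑ z, c i j z = 1)
    (P : Fin L → X × Y × Z → ℝ)
    (hP : ∀ j w, P j w = ∑ i, lam i * (a i j w.1 * (b i j w.2.1 * c i j w.2.2)))
    (f1 f2 f3 : ℝ)
    (hf1 : ∀ i, f1 ≤ ∑ j, shannon (a i j))
    (hf2 : ∀ i, f2 ≤ ∑ j, shannon (b i j))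
    (hf3 : ∀ i, f3 ≤ ∑ j, shannon (c i j))
    (hV1 : f1 ≤ ∑ j, shannon (fun x => ∑ w : Y × Z, P j (x, w))) :
    f1 + f2 + f3 ≤ ∑ j, shannon (P j) := by
  have hlog : (0:ℝ) < Real.log 2 := Real.log_pos (by norm_num)
  -- pointwise Jensen
  have jensen : ∀ j w, ∑ i, lam i * Real.negMulLog (a i j w.1 * (b i j w.2.1 * c i j w.2.2))
      ≤ Real.negMulLog (P j w) := by
    intro j w
    rw [hP]
    have := Real.concaveOn_negMulLog.le_map_sum (t := Finset.univ)
      (w := lam) (p := fun i => a i j w.1 * (b i j w.2.1 * c i j w.2.2))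
      (fun i _ => hlam0 i) hlam1
      (fun i _ => by
        have : 0 ≤ a i j w.1 * (b i j w.2.1 * c i j w.2.2) :=
          mul_nonneg (ha0 i j _) (mul_nonneg (hb0 i j _) (hc0 i j _))
        exact this)
    simpa [smul_eq_mul] using this
  -- per-j entropy bound (in negMulLog scale)
  have key : ∀ j, ∑ i, lam i * ((∑ x, Real.negMulLog (a i j x)) +
      (∑ y, Real.negMulLog (b i j y)) + (∑ z, Real.negMulLog (c i j z)))
      ≤ ∑ w, Real.negMulLog (P j w) := by
    intro j
    calc ∑ i, lam i * ((∑ x, Real.negMulLog (a i j x)) +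
          (∑ y, Real.negMulLog (b i j y)) + (∑ z, Real.negMulLog (c i j z)))
        = ∑ i, lam i * ∑ w : X × Y × Z,
            Real.negMulLog (a i j w.1 * (b i j w.2.1 * c i j w.2.2)) := by
          refine Finset.sum_congr rfl fun i _ => ?_
          rw [prod_negMulLog_sum _ _ _ (ha1 i j) (hb1 i j) (hc1 i j)]
      _ = ∑ w : X × Y × Z, ∑ i, lam i *
            Real.negMulLog (a i j w.1 * (b i j w.2.1 * c i j w.2.2)) := by
          simp only [Finset.mul_sum]; exact Finset.sum_comm
      _ ≤ ∑ w, Real.negMulLog (P j w) :=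
          Finset.sum_le_sum fun w _ => jensen j w
  -- sum over j
  have main : (f1 + f2 + f3) * Real.log 2 ≤ ∑ j, ∑ w, Real.negMulLog (P j w) := by
    calc (f1 + f2 + f3) * Real.log 2
        = ∑ i, lam i * ((f1 + f2 + f3) * Real.log 2) := by
          rw [← Finset.sum_mul, hlam1, one_mul]
      _ ≤ ∑ i, lam i * ∑ j, ((∑ x, Real.negMulLog (a i j x)) +
            (∑ y, Real.negMulLog (b i j y)) + (∑ z, Real.negMulLog (c i j z))) := by
          refine Finset.sum_le_sum fun i _ => mul_le_mul_of_nonneg_left ?_ (hlam0 i)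
          have e1 : f1 * Real.log 2 ≤ ∑ j, ∑ x, Real.negMulLog (a i j x) := by
            have := hf1 i
            simp only [shannon_eq, ← Finset.sum_div] at this
            rwa [le_div_iff₀ hlog] at this
          have e2 : f2 * Real.log 2 ≤ ∑ j, ∑ y, Real.negMulLog (b i j y) := by
            have := hf2 i
            simp only [shannon_eq, ← Finset.sum_div] at this
            rwa [le_div_iff₀ hlog] at this
          have e3 : f3 * Real.log 2 ≤ ∑ j, ∑ z, Real.negMulLog (c i j z) := by
            have := hf3 i
            simp only [shannon_eq, ← Finset.sum_div] at this
            rwa [le_div_iff₀ hlog] at this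
          simp only [Finset.sum_add_distrib]
          nlinarith [e1, e2, e3]
      _ = ∑ j, ∑ i, lam i * ((∑ x, Real.negMulLog (a i j x)) +
            (∑ y, Real.negMulLog (b i j y)) + (∑ z, Real.negMulLog (c i j z))) := by
          simp only [Finset.mul_sum]; exact Finset.sum_comm
      _ ≤ ∑ j, ∑ w, Real.negMulLog (P j w) := Finset.sum_le_sum fun j _ => key j
  simp only [shannon_eq, ← Finset.sum_div]
  rw [le_div_iff₀ hlog]
  exact main
end
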